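/- For each k ≥ 1, the cutoff-composed operator f ↦ R^n ∘ 𝟙_k ∘ (R^n)⁻¹ [f] fails to approximate the identity: its deviation from the identity in the induced sup-norm satisfies ‖R^n 𝟙_k (R^n)⁻¹ − Id‖_∞ ≥ c·k^n for some constant c > 0 depending only on n. -/

import Mathlib

/-- Halving of a slope index. -/
def halfIdx {m : ℕ} (s : Fin (2 ^ (m + 1))) : Fin (2 ^ m) :=
  ⟨s.val / 2, by have h1 := s.isLt; have h2 : 2 ^ (m + 1) = 2 ^ m * 2 := pow_succ 2 m; omega⟩

/-- Digital lines, defined recursively on the depth `m`.  `Dline m ℓ h s` is the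
digital line of height `h` and local slope `s` in the `ℓ`-th width-`2^m` section:
`D_0⟦h,ℓ⟧ = {(h,ℓ)}`, `D_{m,ℓ}⟦h,2t⟧ = D_{m-1,2ℓ}⟦h,t⟧ ∪ D_{m-1,2ℓ+1}⟦h+t,t⟧`,
`D_{m,ℓ}⟦h,2t+1⟧ = D_{m-1,2ℓ}⟦h,t⟧ ∪ D_{m-1,2ℓ+1}⟦h+t+1,t⟧`. -/
def Dline : (m : ℕ) → ℕ → ℤ → Fin (2 ^ m) → Finset (ℤ × ℕ)
  | 0, ℓ, h, _ => {(h, ℓ)}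
  | m + 1, ℓ, h, s =>
      Dline m (2 * ℓ) h (halfIdx s) ∪
        Dline m (2 * ℓ + 1) (h + ((halfIdx s).val : ℤ) + ((s.val % 2 : ℕ) : ℤ)) (halfIdx s)

/-- The digital line `D^n_m⟦h,s⟧` with globally indexed slope `s ∈ Fin 2^n`:
the section is `ℓ = ⌊s/2^m⌋` and the local slope is `s mod 2^m`. -/
def DlineG (n m : ℕ) (h : ℤ) (s : Fin (2 ^ n)) : Finset (ℤ × ℕ) :=
  Dline m (s.val / 2 ^ m) h ⟨s.val % 2 ^ m, Nat.mod_lt _ (Nat.two_pow_pos m)⟩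

/-- Extension of an image on `ℤ × Fin 2^n` by zero to `ℤ × ℕ`. -/
def fext {n : ℕ} (f : ℤ × Fin (2 ^ n) → ℝ) : ℤ × ℕ → ℝ :=
  fun p => if h : p.2 < 2 ^ n then f (p.1, ⟨p.2, h⟩) else 0

/-- The level-`m` single-quadrant ADRT: sum of image values over digital lines. -/
def Radon (n m : ℕ) (f : ℤ × Fin (2 ^ n) → ℝ) : ℤ × Fin (2 ^ n) → ℝ :=
  fun p => ∑ q ∈ DlineG n m p.1 p.2, fext f q

/-- The dual digital line `D'^n_m⟦i,j⟧`: the set of `(h,s)` whose digital line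
passes through `(i,j)`. -/
def Ddual (n m : ℕ) (i : ℤ) (j : Fin (2 ^ n)) : Set (ℤ × Fin (2 ^ n)) :=
  {hs | (i, (j : ℕ)) ∈ DlineG n m hs.1 hs.2}

/-- The level-`m` back-projection: sum over the dual digital line. -/
noncomputable def RadonBack (n m : ℕ) (g : ℤ × Fin (2 ^ n) → ℝ) : ℤ × Fin (2 ^ n) → ℝ :=
  fun p => ∑ᶠ q ∈ Ddual n m p.1 p.2, g q

/-- The Kronecker delta image concentrated at `(h, s)`. -/
def deltaImg {k : ℕ} (h : ℤ) (s : Fin k) : ℤ × Fin k → ℝ :=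
  fun p => if p = (h, s) then 1 else 0

/-- An image on the half-strip: support bounded below in the first coordinate. -/
def BddBelowSupp {k : ℕ} (f : ℤ × Fin k → ℝ) : Prop :=
  ∃ b : ℤ, ∀ i ≤ b, ∀ j, f (i, j) = 0


def eps : ℕ → ℝ
  | 0 => 1
  | (j+1) => (-1 : ℝ) ^ ((j+1) % 2) * eps ((j+1)/2)
decreasing_by exact Nat.div_lt_self (Nat.succ_pos j) one_lt_two

def DD : ℕ → ℕ
  | 0 => 0
  | (j+1) => (j+1)/2 + DD ((j+1)/2)
decreasing_by exact Nat.div_lt_self (Nat.succ_pos j) one_lt_two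

lemma eps_pos_eq (j : ℕ) (hj : j ≠ 0) : eps j = (-1 : ℝ) ^ (j % 2) * eps (j / 2) := by
  cases j with
  | zero => exact absurd rfl hj
  | succ j => rw [eps]

lemma DD_pos_eq (j : ℕ) (hj : j ≠ 0) : DD j = j / 2 + DD (j / 2) := by
  cases j with
  | zero => exact absurd rfl hj
  | succ j => rw [DD]

@[simp] lemma eps_zero : eps 0 = 1 := by rw [eps]
@[simp] lemma DD_zero : DD 0 = 0 := by rw [DD]
@[simp] lemma eps_one : eps 1 = -1 := by rw [eps]; norm_num
@[simp] lemma DD_one : DD 1 = 0 := by rw [DD]; simp [DD]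

lemma eps_two_mul (l : ℕ) : eps (2 * l) = eps l := by
  rcases Nat.eq_zero_or_pos l with rfl | hl
  · simp
  · rw [eps_pos_eq (2 * l) (by omega)]
    have h1 : (2 * l) % 2 = 0 := by omega
    have h2 : (2 * l) / 2 = l := by omega
    rw [h1, h2]; simp

lemma eps_two_mul_add_one (l : ℕ) : eps (2 * l + 1) = - eps l := by
  rw [eps_pos_eq (2 * l + 1) (by omega)]
  have h1 : (2 * l + 1) % 2 = 1 := by omega
  have h2 : (2 * l + 1) / 2 = l := by omega
  rw [h1, h2]; simp

lemma DD_two_mul (l : ℕ) : DD (2 * l) = l + DD l := by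
  rcases Nat.eq_zero_or_pos l with rfl | hl
  · simp
  · rw [DD_pos_eq (2 * l) (by omega)]
    have h2 : (2 * l) / 2 = l := by omega
    rw [h2]

lemma DD_two_mul_add_one (l : ℕ) : DD (2 * l + 1) = l + DD l := by
  rw [DD_pos_eq (2 * l + 1) (by omega)]
  have h2 : (2 * l + 1) / 2 = l := by omega
  rw [h2]

noncomputable def BB (r : ℕ) (m : ℤ) : ℝ := if 0 ≤ m then (m.toNat.choose r : ℝ) else 0

lemma BB_pascal (r : ℕ) (m : ℤ) : BB (r+1) (m+1) = BB (r+1) m + BB r m := by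
  unfold BB
  rcases lt_trichotomy m (-1) with h | h | h
  · rw [if_neg (by omega), if_neg (by omega), if_neg (by omega)]; ring
  · subst h; norm_num [Nat.choose_zero_succ]
  · have h0 : 0 ≤ m := by omega
    rw [if_pos (by omega), if_pos h0, if_pos h0]
    have : (m+1).toNat = m.toNat + 1 := by omega
    rw [this, Nat.choose_succ_succ]
    push_cast; ring

lemma BB_nonneg (r : ℕ) (m : ℤ) : 0 ≤ BB r m := by
  unfold BB; split <;> positivity

lemma BB_mono (r : ℕ) {m m' : ℤ} (h : m ≤ m') : BB r m ≤ BB r m' := by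
  unfold BB
  by_cases h0 : 0 ≤ m
  · rw [if_pos h0, if_pos (by omega)]
    exact_mod_cast Nat.choose_le_choose r (by omega)
  · rw [if_neg h0]; split
    · positivity
    · exact le_refl 0

lemma Dline_col : ∀ (m : ℕ) (ℓ : ℕ) (h : ℤ) (s : Fin (2^m)) (q : ℤ × ℕ),
    q ∈ Dline m ℓ h s → ℓ * 2^m ≤ q.2 ∧ q.2 < ℓ * 2^m + 2^m := by
  intro m
  induction m with
  | zero =>
    intro ℓ h s q hq
    simp only [Dline, Finset.mem_singleton] at hq
    subst hq; simp
  | succ m IH =>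
    intro ℓ h s q hq
    rw [Dline, Finset.mem_union] at hq
    have h2 : 2^(m+1) = 2^m * 2 := pow_succ 2 m
    have e1 : 2*ℓ*2^m = ℓ*2^(m+1) := by rw [pow_succ]; ring
    have e2 : (2*ℓ+1)*2^m = ℓ*2^(m+1) + 2^m := by rw [pow_succ]; ring
    rcases hq with hq | hq
    · have := IH (2*ℓ) h (halfIdx s) q hq; omega
    · have := IH (2*ℓ+1) _ (halfIdx s) q hq; omega

lemma Dline_disjoint (m : ℕ) (ℓ : ℕ) (h h' : ℤ) (s s' : Fin (2^m)) :
    Disjoint (Dline m (2*ℓ) h s) (Dline m (2*ℓ+1) h' s') := by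
  rw [Finset.disjoint_left]
  intro q hq hq'
  have h1 := Dline_col m (2*ℓ) h s q hq
  have h2 := Dline_col m (2*ℓ+1) h' s' q hq'
  have : (0:ℕ) < 2^m := Nat.two_pow_pos m
  have e : (2*ℓ+1)*2^m = 2*ℓ*2^m + 2^m := by ring
  omega

lemma lineSum (m : ℕ) : ∀ (r : ℕ), m ≤ r → ∀ (ℓ : ℕ) (a h : ℤ) (s : Fin (2^m)),
    ∑ q ∈ Dline m ℓ h s, (eps q.2 * BB r (q.1 + a - (DD q.2 : ℤ)))
      = if s.val = 2^m - 1 then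
          (-1:ℝ)^m * eps ℓ * BB (r-m) (h + a - (ℓ:ℤ)*(2^m-1) - (DD ℓ : ℤ)) else 0 := by
  induction m with
  | zero =>
    intro r _ ℓ a h s
    simp only [Dline, Finset.sum_singleton]
    rw [if_pos (by omega)]
    simp
  | succ m IH =>
    intro r hr ℓ a h s
    rw [Dline, Finset.sum_union (Dline_disjoint m ℓ _ _ _ _),
      IH r (by omega) (2*ℓ) a h (halfIdx s),
      IH r (by omega) (2*ℓ+1) a _ (halfIdx s)]
    have hpow : (2:ℕ)^(m+1) = 2^m * 2 := pow_succ 2 m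
    have hslt := s.isLt
    have hdef : (halfIdx s).val = s.val / 2 := rfl
    by_cases hs' : (halfIdx s).val = 2^m - 1
    · rw [if_pos hs', if_pos hs']
      have hpm : (1:ℕ) ≤ 2^m := Nat.one_le_two_pow
      -- arguments
      have harg1 : h + a - ((2*ℓ : ℕ):ℤ)*(2^m-1) - (DD (2*ℓ) : ℤ)
          = h + a - (ℓ:ℤ)*(2^(m+1)-1) - (DD ℓ : ℤ) := by
        rw [DD_two_mul]; push_cast; ring
      have harg2 : h + ((halfIdx s).val : ℤ) + ((s.val % 2 : ℕ) : ℤ) + a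
            - ((2*ℓ+1 : ℕ):ℤ)*(2^m-1) - (DD (2*ℓ+1) : ℤ)
          = (h + a - (ℓ:ℤ)*(2^(m+1)-1) - (DD ℓ : ℤ)) + ((s.val % 2 : ℕ) : ℤ) := by
        rw [DD_two_mul_add_one, hs']
        have : ((2^m - 1 : ℕ) : ℤ) = 2^m - 1 := by push_cast [hpm]; ring
        rw [this]; push_cast; ring
      rw [harg1, harg2, eps_two_mul, eps_two_mul_add_one]
      set X := h + a - (ℓ:ℤ)*(2^(m+1)-1) - (DD ℓ : ℤ) with hX
      by_cases hp : s.val % 2 = 1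
      · rw [if_pos (by omega)]
        rw [hp]
        have hq : r - m = (r - (m+1)) + 1 := by omega
        rw [hq]
        push_cast
        rw [BB_pascal (r - (m+1)) X]
        ring
      · have hp0 : s.val % 2 = 0 := by omega
        rw [if_neg (by omega), hp0]
        push_cast
        rw [add_zero]
        ring
    · rw [if_neg hs', if_neg hs', if_neg (by omega)]
      simp

lemma Dline_shift (m : ℕ) : ∀ (ℓ : ℕ) (h t : ℤ) (s : Fin (2^m)),
    Dline m ℓ (h + t) s = (Dline m ℓ h s).image (fun q => (q.1 + t, q.2)) := by
  induction m with
  | zero =>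
    intro ℓ h t s
    simp [Dline]
  | succ m IH =>
    intro ℓ h t s
    rw [Dline, Dline, Finset.image_union, IH (2*ℓ) h t (halfIdx s)]
    have e : h + t + ((halfIdx s).val : ℤ) + ((s.val % 2 : ℕ) : ℤ)
        = (h + ((halfIdx s).val : ℤ) + ((s.val % 2 : ℕ) : ℤ)) + t := by ring
    rw [e, IH (2*ℓ+1) _ t (halfIdx s)]

lemma shift_injOn (t : ℤ) (S : Finset (ℤ × ℕ)) :
    ∀ x ∈ S, ∀ y ∈ S, (fun q : ℤ × ℕ => (q.1 + t, q.2)) x = (fun q : ℤ × ℕ => (q.1 + t, q.2)) y → x = y := by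
  intro a _ b _ hab
  simp only [Prod.mk.injEq] at hab
  exact Prod.ext (by omega) hab.2

lemma Radon_shift (n : ℕ) (g : ℤ × Fin (2^n) → ℝ) (t h : ℤ) (s : Fin (2^n)) :
    Radon n n (fun p => g (p.1 + t, p.2)) (h, s) = Radon n n g (h + t, s) := by
  unfold Radon DlineG
  simp only
  rw [Dline_shift n _ h t _, Finset.sum_image (shift_injOn t _)]
  rfl

lemma Dline_max (m : ℕ) : ∀ (ℓ : ℕ) (h : ℤ) (s : Fin (2^m)), s.val = 2^m - 1 →
    Dline m ℓ h s
      = (Finset.range (2^m)).image (fun j : ℕ => (h + (j:ℤ), ℓ * 2^m + j)) := by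
  induction m with
  | zero =>
    intro ℓ h s _
    simp [Dline]
  | succ m IH =>
    intro ℓ h s hs
    have hpow : (2:ℕ)^(m+1) = 2^m * 2 := pow_succ 2 m
    have hpm : (1:ℕ) ≤ 2^m := Nat.one_le_two_pow
    have hhalf : (halfIdx s).val = 2^m - 1 := by
      show s.val / 2 = 2^m - 1; omega
    have hmod : s.val % 2 = 1 := by omega
    rw [Dline, IH (2*ℓ) h (halfIdx s) hhalf, IH (2*ℓ+1) _ (halfIdx s) hhalf,
      hhalf, hmod]
    have e1 : 2*ℓ*2^m = ℓ*2^(m+1) := by rw [pow_succ]; ring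
    have e2 : (2*ℓ+1)*2^m = ℓ*2^(m+1) + 2^m := by rw [pow_succ]; ring
    apply Finset.ext
    intro q
    simp only [Finset.mem_union, Finset.mem_image, Finset.mem_range, Prod.mk.injEq]
    constructor
    · rintro (⟨j, hj, rfl, rfl⟩ | ⟨j, hj, rfl, rfl⟩)
      · refine ⟨j, by omega, ?_⟩
        simp only [Prod.mk.injEq]
        exact ⟨trivial, by omega⟩
      · refine ⟨2^m + j, by omega, ?_⟩
        simp only [Prod.mk.injEq]
        refine ⟨?_, by omega⟩
        push_cast [hpm]
        ring
    · rintro ⟨j, hj, rfl, rfl⟩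
      by_cases hjm : j < 2^m
      · refine Or.inl ⟨j, hjm, ?_⟩
        simp only [Prod.mk.injEq]
        exact ⟨trivial, by omega⟩
      · refine Or.inr ⟨j - 2^m, by omega, ?_⟩
        simp only [Prod.mk.injEq]
        refine ⟨?_, by omega⟩
        push_cast [hpm, (by omega : 2^m ≤ j)]
        ring

noncomputable def gbase (n : ℕ) : ℤ × Fin (2^n) → ℝ :=
  fun p => (-1:ℝ)^n * eps p.2.val * BB (n-1) (p.1 + ((2:ℤ)^n - 2) - (DD p.2.val : ℤ))

lemma BB_zero_eval (x : ℤ) : BB 0 x = if 0 ≤ x then 1 else 0 := by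
  unfold BB; split <;> simp

lemma Radon_gbase (n : ℕ) (hn : 1 ≤ n) :
    Radon n n (gbase n)
      = deltaImg ((1:ℤ) - 2^n) ⟨2^n - 1, by have := Nat.two_pow_pos n; omega⟩ := by
  obtain ⟨m, rfl⟩ : ∃ m, n = m + 1 := ⟨n-1, by omega⟩
  funext p
  obtain ⟨h, s⟩ := p
  unfold Radon DlineG
  simp only [Nat.div_eq_of_lt s.isLt, Nat.mod_eq_of_lt s.isLt, Fin.eta]
  have hsummand : ∀ q ∈ Dline (m+1) 0 h s,
      fext (gbase (m+1)) q
        = (-1:ℝ)^(m+1) * (eps q.2 * BB m (q.1 + ((2:ℤ)^(m+1) - 2) - (DD q.2 : ℤ))) := by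
    intro q hq
    have hcol := Dline_col (m+1) 0 h s q hq
    have hq2 : q.2 < 2^(m+1) := by omega
    unfold fext gbase
    rw [dif_pos hq2]
    simp only [Nat.add_sub_cancel]
    ring
  rw [Finset.sum_congr rfl hsummand, ← Finset.mul_sum]
  rw [Dline, Finset.sum_union (Dline_disjoint m 0 _ _ _ _),
    lineSum m m le_rfl (2*0) ((2:ℤ)^(m+1) - 2) h (halfIdx s),
    lineSum m m le_rfl (2*0+1) ((2:ℤ)^(m+1) - 2) _ (halfIdx s)]
  have hpm : (1:ℕ) ≤ 2^m := Nat.one_le_two_pow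
  have hpow : (2:ℕ)^(m+1) = 2^m * 2 := pow_succ 2 m
  have hslt := s.isLt
  have hsign : ((-1:ℝ)^(m+1) * (-1:ℝ)^m) = -1 := by
    rw [← pow_add, show m+1+m = 2*m+1 from by ring, pow_succ, pow_mul]
    norm_num
  simp only [deltaImg, Prod.mk.injEq, Fin.ext_iff]
  by_cases hs' : (halfIdx s).val = 2^m - 1
  · rw [if_pos hs', if_pos hs']
    have harg1 : h + ((2:ℤ)^(m+1) - 2) - ((2*0 : ℕ):ℤ)*((2:ℤ)^m-1) - ((DD (2*0)):ℤ)
        = h + 2^(m+1) - 2 := by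
      push_cast [show DD (2*0) = 0 from by norm_num]
      ring
    have hcast : (((halfIdx s).val : ℕ) : ℤ) = (2:ℤ)^m - 1 := by
      rw [hs']; push_cast [hpm]; ring
    have harg2 : h + (((halfIdx s).val : ℕ) : ℤ) + ((s.val % 2 : ℕ) : ℤ) + ((2:ℤ)^(m+1) - 2)
          - ((2*0+1 : ℕ):ℤ)*((2:ℤ)^m-1) - ((DD (2*0+1)):ℤ)
        = (h + 2^(m+1) - 2) + ((s.val % 2 : ℕ) : ℤ) := by
      rw [hcast]
      have : DD (2*0+1) = 0 := by norm_num
      rw [this]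
      push_cast
      ring
    rw [harg1, harg2]
    have heps0 : eps (2*0) = 1 := by norm_num
    have heps1 : eps (2*0+1) = -1 := by norm_num
    rw [heps0, heps1, Nat.sub_self]
    by_cases hp : s.val % 2 = 1
    · rw [hp]
      have hdef : (halfIdx s).val = s.val / 2 := rfl
      have hcond : (s.val = 2^(m+1) - 1) := by omega
      rw [mul_add]
      rw [← mul_assoc, ← mul_assoc]
      -- now (-1)^(m+1) * (-1)^m appears? massage with ring_nf instead
      by_cases hh : h = 1 - 2^(m+1)
      · rw [if_pos ⟨hh, hcond⟩]
        subst hh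
        rw [BB_zero_eval, BB_zero_eval,
          if_neg (by omega), if_pos (by push_cast; omega)]
        have sq : ((-1:ℝ))^(m*2) = 1 := by rw [mul_comm, pow_mul]; norm_num
        linear_combination sq
      · rw [if_neg (by tauto)]
        rw [BB_zero_eval, BB_zero_eval]
        by_cases h0 : (0:ℤ) ≤ h + 2^(m+1) - 2
        · rw [if_pos h0, if_pos (by push_cast; omega)]
          ring
        · rw [if_neg h0, if_neg (by push_cast; omega)]
          ring
    · have hp0 : s.val % 2 = 0 := by omega
      rw [hp0]
      rw [if_neg (by
        rintro ⟨-, hB⟩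
        omega)]
      push_cast
      rw [add_zero]
      ring
  · rw [if_neg hs', if_neg hs', if_neg ?_]
    · simp
    · rintro ⟨-, hsv⟩
      have : (halfIdx s).val = s.val / 2 := rfl
      omega

lemma eps_two_pow_sub_one (n : ℕ) : eps (2^n - 1) = (-1:ℝ)^n := by
  induction n with
  | zero => simp
  | succ n IH =>
    have hpm : (1:ℕ) ≤ 2^n := Nat.one_le_two_pow
    have h1 : 2^(n+1) - 1 = 2*(2^n - 1) + 1 := by rw [pow_succ]; omega
    rw [h1, eps_two_mul_add_one, IH, pow_succ]
    ring

lemma DD_two_pow_sub_one (n : ℕ) : (DD (2^n - 1) : ℤ) = 2^n - 1 - n := by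
  induction n with
  | zero => simp
  | succ n IH =>
    have hpm : (1:ℕ) ≤ 2^n := Nat.one_le_two_pow
    have h1 : 2^(n+1) - 1 = 2*(2^n - 1) + 1 := by rw [pow_succ]; omega
    rw [h1, DD_two_mul_add_one]
    have h2 : ((2^n - 1 + DD (2^n - 1) : ℕ) : ℤ)
        = ((2^n - 1 : ℕ) : ℤ) + ((DD (2^n - 1) : ℕ) : ℤ) := by push_cast; ring
    rw [h2, IH]
    have h3 : ((2^n - 1 : ℕ) : ℤ) = 2^n - 1 := by push_cast [hpm]; ring
    rw [h3]
    push_cast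
    rw [pow_succ]
    ring

/-- The cutoff-composed operator `R^n ∘ 𝟙_k ∘ (R^n)⁻¹` fails to approximate the
identity: for any inverse `Rinv` of the ADRT on half-strip images, there is
`c > 0` (depending only on `n`) such that for every `k ≥ 1` some image `f` with
`‖f‖_∞ ≤ 1` witnesses a deviation of size at least `c·k^n`. -/
theorem Radon_cutoff_not_identity (n : ℕ)
    (Rinv : (ℤ × Fin (2 ^ n) → ℝ) → (ℤ × Fin (2 ^ n) → ℝ))
    (hinv : ∀ f, BddBelowSupp f →
      Radon n n (Rinv f) = f ∧ Rinv (Radon n n f) = f ∧ BddBelowSupp (Rinv f)) :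
    ∃ c : ℝ, 0 < c ∧ ∀ k : ℕ, 1 ≤ k →
      ∃ f : ℤ × Fin (2 ^ n) → ℝ, BddBelowSupp f ∧ (∀ p, |f p| ≤ 1) ∧
        ∃ p : ℤ × Fin (2 ^ n),
          c * (k : ℝ) ^ n ≤
            |Radon n n
                (fun q => (if 0 ≤ q.1 ∧ q.1 < ((k + 1) * 2 ^ n : ℤ) then 1 else 0)
                  * Rinv f q) p
              - f p| := by
  refine ⟨(((n-1).factorial : ℕ) : ℝ)⁻¹, by positivity, ?_⟩
  intro k hk
  by_cases hn : n = 0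
  · -- trivial case n = 0
    subst hn
    set s0 : Fin (2^0) := ⟨0, Nat.two_pow_pos 0⟩ with hs0
    refine ⟨deltaImg (-1) s0, ⟨-2, ?_⟩, ?_, ((-1 : ℤ), s0), ?_⟩
    · intro i hi j
      unfold deltaImg
      rw [if_neg]
      intro he
      have := congrArg Prod.fst he
      simp only at this
      omega
    · intro p
      unfold deltaImg
      split <;> norm_num
    · have hRad : ∀ G : ℤ × Fin (2^0) → ℝ,
          Radon 0 0 G ((-1 : ℤ), s0) = fext G ((-1 : ℤ), 0) := by
        intro G
        unfold Radon DlineG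
        simp only [Dline, Finset.sum_singleton]
        simp [hs0]
      rw [hRad]
      unfold fext
      rw [dif_pos (by norm_num : (0:ℕ) < 2^0)]
      simp only
      rw [if_neg (by omega)]
      unfold deltaImg
      rw [if_pos (by rw [hs0])]
      norm_num [Nat.factorial]
  · -- main case n ≥ 1
    have hn1 : 1 ≤ n := by omega
    have hN1 : (1:ℕ) ≤ 2^n := Nat.one_le_two_pow
    have hcast2 : ((2^n : ℕ) : ℤ) = (2:ℤ)^n := by push_cast; rfl
    set A : ℕ := k * 2^n with hA
    have hkA : k ≤ A := by
      calc k = k * 1 := by ring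
        _ ≤ k * 2^n := Nat.mul_le_mul_left k hN1
    set Knat : ℕ := A + 2^n with hKnat
    set xnat : ℕ := A + 1 with hxnat
    set x : ℤ := (xnat : ℤ) with hx
    set s0 : Fin (2^n) := ⟨2^n - 1, by have := Nat.two_pow_pos n; omega⟩ with hs0
    have hs0v : (s0 : ℕ) = 2^n - 1 := by rw [hs0]
    set h0 : ℤ := 1 - 2^n with hh0
    set gk : ℤ × Fin (2^n) → ℝ :=
      (fun p => ∑ t ∈ Finset.range k, gbase n (p.1 + (t:ℤ), p.2)) with hgk
    set f : ℤ × Fin (2^n) → ℝ :=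
      (fun p => ∑ t ∈ Finset.range k, deltaImg (h0 - (t:ℤ)) s0 p) with hf
    have hKz : ((k : ℤ) + 1) * 2^n = (Knat : ℤ) := by
      rw [hKnat, hA]; push_cast; ring
    have hRgb := Radon_gbase n hn1
    -- Radon of gk is f
    have hRgk : Radon n n gk = f := by
      funext p
      obtain ⟨h, s⟩ := p
      have e1 : ∀ q : ℤ × ℕ, fext gk q
          = ∑ t ∈ Finset.range k, fext (fun p => gbase n (p.1 + (t:ℤ), p.2)) q := by
        intro q
        unfold fext
        split
        · rfl
        · simp
      show ∑ q ∈ DlineG n n h s, fext gk q = f (h, s)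
      rw [Finset.sum_congr rfl (fun q _ => e1 q), Finset.sum_comm]
      have e2 : ∀ t ∈ Finset.range k,
          (∑ q ∈ DlineG n n h s, fext (fun p => gbase n (p.1 + (t:ℤ), p.2)) q)
            = deltaImg (h0 - (t:ℤ)) s0 (h, s) := by
        intro t _
        have hiff : (((h + (t:ℤ) : ℤ), s) = ((1:ℤ) - 2^n, (⟨2^n - 1, by have := Nat.two_pow_pos n; omega⟩ : Fin (2^n))))
            ↔ ((h, s) = (h0 - (t:ℤ), s0)) := by
          simp only [Prod.mk.injEq]
          constructor
          · rintro ⟨h1, h2⟩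
            exact ⟨by omega, h2.trans (Fin.ext (by simp [hs0v]))⟩
          · rintro ⟨h1, h2⟩
            exact ⟨by omega, h2.trans (Fin.ext (by simp [hs0v]))⟩
        calc (∑ q ∈ DlineG n n h s, fext (fun p => gbase n (p.1 + (t:ℤ), p.2)) q)
            = Radon n n (fun p => gbase n (p.1 + (t:ℤ), p.2)) (h, s) := rfl
          _ = Radon n n (gbase n) (h + (t:ℤ), s) := Radon_shift n (gbase n) (t:ℤ) h s
          _ = deltaImg (h0 - (t:ℤ)) s0 (h, s) := by
              rw [hRgb]
              unfold deltaImg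
              rw [if_congr hiff rfl rfl]
      rw [Finset.sum_congr rfl e2]
    -- f is 0/1 valued
    have hfval : ∀ p, f p = 0 ∨ f p = 1 := by
      intro p
      by_cases hc : ∃ t ∈ Finset.range k, p = ((h0 - (t:ℤ)), s0)
      · right
        obtain ⟨t0, ht0, hp⟩ := hc
        show (∑ t ∈ Finset.range k, deltaImg (h0 - (t:ℤ)) s0 p) = 1
        rw [Finset.sum_eq_single_of_mem t0 ht0]
        · unfold deltaImg; rw [if_pos hp]
        · intro t ht hne
          unfold deltaImg
          rw [if_neg]
          intro he
          rw [hp] at he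
          have h1 := congrArg Prod.fst he
          simp only at h1
          have : t = t0 := by omega
          exact hne this
      · left
        apply Finset.sum_eq_zero
        intro t ht
        unfold deltaImg
        rw [if_neg (fun he => hc ⟨t, ht, he⟩)]
    have hfbd : ∀ p, |f p| ≤ 1 := by
      intro p
      rcases hfval p with h | h <;> rw [h] <;> norm_num
    have hfbdd : BddBelowSupp f := by
      refine ⟨h0 - (k:ℤ) - 1, ?_⟩
      intro i hi j
      apply Finset.sum_eq_zero
      intro t ht
      unfold deltaImg
      rw [if_neg]
      intro he
      have h1 := congrArg Prod.fst he
      simp only at h1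
      have h2 := Finset.mem_range.mp ht
      omega
    -- gk has support bounded below
    have hgkbdd : BddBelowSupp gk := by
      refine ⟨-(2:ℤ)^n - (k:ℤ) - 5, ?_⟩
      intro i hi j
      apply Finset.sum_eq_zero
      intro t ht
      unfold gbase
      apply mul_eq_zero_of_right
      unfold BB
      rw [if_neg]
      have h1 : (0:ℤ) ≤ (DD j.val : ℤ) := Int.natCast_nonneg _
      have h2 := Finset.mem_range.mp ht
      omega
    have hRinvf : Rinv f = gk := by
      have h2 := (hinv gk hgkbdd).2.1
      rw [hRgk] at h2
      exact h2
    -- the common line shape at the witness point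
    have hline : ∀ G : ℤ × Fin (2^n) → ℝ,
        Radon n n G (x, s0)
          = ∑ j ∈ Finset.range (2^n), fext G (x + (j:ℤ), 0 * 2^n + j) := by
      intro G
      unfold Radon DlineG
      simp only [Nat.div_eq_of_lt s0.isLt, Nat.mod_eq_of_lt s0.isLt, Fin.eta]
      rw [Dline_max n 0 x s0 hs0v]
      rw [Finset.sum_image]
      intro a _ b _ hab
      simp only [Prod.mk.injEq] at hab
      omega
    have hf0 : f (x, s0) = 0 := by
      apply Finset.sum_eq_zero
      intro t ht
      unfold deltaImg
      rw [if_neg]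
      intro he
      have h1 := congrArg Prod.fst he
      simp only [hx, hh0] at h1
      have h2 := Finset.mem_range.mp ht
      omega
    have hRgkp : Radon n n gk (x, s0) = 0 := by rw [hRgk]; exact hf0
    -- the key cancellation
    have key : Radon n n
          (fun q => (if 0 ≤ q.1 ∧ q.1 < ((k : ℤ) + 1) * 2 ^ n then (1:ℝ) else 0) * gk q) (x, s0)
          - Radon n n gk (x, s0) = - gk ((Knat : ℤ), s0) := by
      rw [hline, hline, ← Finset.sum_sub_distrib]
      rw [Finset.sum_eq_single (2^n - 1)]
      · have hj2 : 0 * 2^n + (2^n - 1) < 2^n := by omega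
        unfold fext
        rw [dif_pos hj2, dif_pos hj2]
        simp only [hKz]
        rw [if_neg (by
          push_cast
          omega)]
        have hPQ : ((x + ((2^n - 1 : ℕ):ℤ) : ℤ), (⟨0 * 2^n + (2^n - 1), hj2⟩ : Fin (2^n)))
            = ((Knat : ℤ), s0) := by
          refine Prod.ext ?_ ?_
          · show x + ((2^n - 1 : ℕ):ℤ) = (Knat : ℤ)
            rw [hx, hxnat, hKnat]
            push_cast [hN1]
            ring
          · apply Fin.ext
            show 0 * 2^n + (2^n - 1) = (s0 : ℕ)
            rw [hs0v]
            omega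
        rw [hPQ]
        ring
      · intro j hj hjne
        have hjr := Finset.mem_range.mp hj
        have hj2 : 0 * 2^n + j < 2^n := by omega
        unfold fext
        rw [dif_pos hj2, dif_pos hj2]
        simp only [hKz]
        rw [if_pos (by
          constructor
          · omega
          · push_cast
            omega)]
        ring
      · intro habs
        exact absurd (Finset.mem_range.mpr (by omega)) habs
    -- evaluate gk at the removed point
    have hgkval : gk ((Knat : ℤ), s0)
        = ∑ t ∈ Finset.range k, BB (n-1) ((Knat : ℤ) + (t:ℤ) + (n:ℤ) - 1) := by
      show (∑ t ∈ Finset.range k,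
          gbase n ((Knat : ℤ) + (t:ℤ), s0)) = _
      apply Finset.sum_congr rfl
      intro t _
      show (-1:ℝ)^n * eps (s0 : ℕ)
          * BB (n-1) (((Knat : ℤ) + (t:ℤ)) + ((2:ℤ)^n - 2) - (DD (s0 : ℕ) : ℤ)) = _
      rw [hs0v, eps_two_pow_sub_one]
      have sq : ((-1:ℝ))^n * ((-1:ℝ))^n = 1 := by
        rw [← pow_add, show n + n = 2*n from by ring, pow_mul]
        norm_num
      rw [sq, one_mul]
      have harg : (Knat : ℤ) + (t:ℤ) + ((2:ℤ)^n - 2) - (DD (2^n - 1) : ℤ)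
          = (Knat : ℤ) + (t:ℤ) + (n:ℤ) - 1 := by
        rw [DD_two_pow_sub_one]
        ring
      rw [harg]
    have hgknn : 0 ≤ gk ((Knat : ℤ), s0) := by
      rw [hgkval]
      exact Finset.sum_nonneg (fun t _ => BB_nonneg _ _)
    -- the lower bound
    have hBBval : BB (n-1) ((Knat : ℤ) + (n:ℤ) - 1)
        = (((Knat + n - 1).choose (n-1) : ℕ) : ℝ) := by
      unfold BB
      rw [if_pos (by omega)]
      rw [show ((Knat : ℤ) + (n:ℤ) - 1).toNat = Knat + n - 1 from by omega]
    have hsum_ge : (k:ℝ) * BB (n-1) ((Knat : ℤ) + (n:ℤ) - 1) ≤ gk ((Knat : ℤ), s0) := by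
      rw [hgkval]
      have : (k:ℝ) * BB (n-1) ((Knat : ℤ) + (n:ℤ) - 1)
          = ∑ _t ∈ Finset.range k, BB (n-1) ((Knat : ℤ) + (n:ℤ) - 1) := by
        rw [Finset.sum_const, Finset.card_range]
        simp
      rw [this]
      apply Finset.sum_le_sum
      intro t _
      apply BB_mono
      omega
    have hchoose : ((k:ℝ))^(n-1) / (((n-1).factorial : ℕ) : ℝ)
        ≤ (((Knat + n - 1).choose (n-1) : ℕ) : ℝ) := by
      have h1 := Nat.pow_le_choose (n-1) (Knat + n - 1) (α := ℝ)
      have e2 : Knat + n - 1 + 1 - (n-1) = Knat + 1 := by omega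
      rw [e2] at h1
      refine le_trans ?_ h1
      gcongr
      exact_mod_cast (by omega : k ≤ Knat + 1)
    -- final chain
    refine ⟨f, hfbdd, hfbd, (x, s0), ?_⟩
    rw [hRinvf]
    rw [hRgkp, sub_zero] at key
    rw [hf0, sub_zero, key, abs_neg, abs_of_nonneg hgknn]
    have hkpow : (k:ℝ)^n = (k:ℝ) * (k:ℝ)^(n-1) := by
      conv_lhs => rw [show n = (n-1)+1 from by omega]
      rw [pow_succ]
      ring
    calc (((n-1).factorial : ℕ) : ℝ)⁻¹ * (k:ℝ)^n
        = (k:ℝ) * ((k:ℝ)^(n-1) / (((n-1).factorial : ℕ) : ℝ)) := by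
          rw [hkpow]; ring
      _ ≤ (k:ℝ) * (((Knat + n - 1).choose (n-1) : ℕ) : ℝ) := by
          apply mul_le_mul_of_nonneg_left hchoose (by positivity)
      _ = (k:ℝ) * BB (n-1) ((Knat : ℤ) + (n:ℤ) - 1) := by rw [hBBval]
      _ ≤ gk ((Knat : ℤ), s0) := hsum_ge
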